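/- Let G be a group with elements a_1, ..., a_{g-1}, u_1, ..., u_{g-1} satisfying the braid relations within each family, a_i u_j = u_j a_i for |i-j|>1, a_i u_{i+1} u_i = u_{i+1} u_i a_{i+1}, a_{i+1} u_i u_{i+1} = u_i u_{i+1} a_i, a_1 u_1 a_1 = u_1, and u_2 a_1 a_2 u_1 = a_1 a_2. Set r = a_1 ⋯ a_{g-1} u_{g-1} ⋯ u_1. Then r a_i = a_i r and u_i r u_i = r for all i = 2, ..., g-1. -/
import Mathlib


variable {G : Type*} [Group G]

/-- `prodAsc f m = f 1 * f 2 * ⋯ * f m` (empty product for `m = 0`). -/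
def prodAsc (f : ℕ → G) (m : ℕ) : G :=
  ((List.range m).map (fun i => f (i + 1))).prod

/-- `prodDesc f m = f m * ⋯ * f 2 * f 1` (empty product for `m = 0`). -/
def prodDesc (f : ℕ → G) (m : ℕ) : G :=
  (((List.range m).reverse).map (fun i => f (i + 1))).prod

/-- The fundamental braid element: `Δ 0 = Δ 1 = 1`, `Δ (m+1) = (u 1 ⋯ u m) * Δ m`. -/
def braidDelta (u : ℕ → G) : ℕ → G
  | 0 => 1
  | m + 1 => prodAsc u m * braidDelta u m

lemma prodAsc_succ (f : ℕ → G) (m : ℕ) :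
    prodAsc f (m + 1) = prodAsc f m * f (m + 1) := by
  simp [prodAsc, List.range_succ]

lemma prodDesc_succ (f : ℕ → G) (m : ℕ) :
    prodDesc f (m + 1) = f (m + 1) * prodDesc f m := by
  simp [prodDesc, List.range_succ]

lemma commute_prodAsc (f : ℕ → G) (m : ℕ) (c : G)
    (h : ∀ j, 1 ≤ j → j ≤ m → c * f j = f j * c) :
    c * prodAsc f m = prodAsc f m * c := by
  induction m with
  | zero => simp [prodAsc]
  | succ n ih =>
    rw [prodAsc_succ, ← mul_assoc, ih (fun j h1 h2 => h j h1 (by omega)),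
      mul_assoc, h (n + 1) (by omega) le_rfl, ← mul_assoc]

lemma commute_prodDesc (f : ℕ → G) (m : ℕ) (c : G)
    (h : ∀ j, 1 ≤ j → j ≤ m → c * f j = f j * c) :
    c * prodDesc f m = prodDesc f m * c := by
  induction m with
  | zero => simp [prodDesc]
  | succ n ih =>
    rw [prodDesc_succ, ← mul_assoc, h (n + 1) (by omega) le_rfl,
      mul_assoc, ih (fun j h1 h2 => h j h1 (by omega)), ← mul_assoc]

/-- The key inductive step: from the relation `t p b s = p b` (the shifted (C5) at level `i`)
we derive `v b c t = b c` (the shifted (C5) at level `i+1`), where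
`p = a_{i-1}, b = a_i, c = a_{i+1}, s = u_{i-1}, t = u_i, v = u_{i+1}`. -/
lemma c5_step (p b c s t v : G)
    (h_st : s * t * s = t * s * t)
    (h_tv : t * v * t = v * t * v)
    (h_sv : s * v = v * s)
    (h_cs : c * s = s * c)
    (h_pv : p * v = v * p)
    (h_pts : p * t * s = t * s * b)
    (h_bvt : b * v * t = v * t * c)
    (hSi : t * p * b * s = p * b) :
    v * b * c * t = b * c := by
  have h_st' : ∀ w : G, s * (t * (s * w)) = t * (s * (t * w)) := fun w => by
    simpa [mul_assoc] using congrArg (· * w) h_st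
  have h_tv' : ∀ w : G, t * (v * (t * w)) = v * (t * (v * w)) := fun w => by
    simpa [mul_assoc] using congrArg (· * w) h_tv
  have h_sv' : ∀ w : G, s * (v * w) = v * (s * w) := fun w => by
    simpa [mul_assoc] using congrArg (· * w) h_sv
  have h_cs' : ∀ w : G, c * (s * w) = s * (c * w) := fun w => by
    simpa [mul_assoc] using congrArg (· * w) h_cs
  have h_pv' : ∀ w : G, p * (v * w) = v * (p * w) := fun w => by
    simpa [mul_assoc] using congrArg (· * w) h_pv
  have h_pts' : ∀ w : G, p * (t * (s * w)) = t * (s * (b * w)) := fun w => by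
    simpa [mul_assoc] using congrArg (· * w) h_pts
  have h_bvt' : ∀ w : G, b * (v * (t * w)) = v * (t * (c * w)) := fun w => by
    simpa [mul_assoc] using congrArg (· * w) h_bvt
  have hSi' : ∀ w : G, t * (p * (b * (s * w))) = p * (b * w) := fun w => by
    simpa [mul_assoc] using congrArg (· * w) hSi
  -- derived rewriting rules
  have r_b : ∀ w : G, b * w = s⁻¹ * (t⁻¹ * (p * (t * (s * w)))) := fun w => by
    rw [h_pts', inv_mul_cancel_left, inv_mul_cancel_left]
  have r_sv : ∀ w : G, v * (s⁻¹ * w) = s⁻¹ * (v * w) := fun w => by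
    calc v * (s⁻¹ * w) = s⁻¹ * (s * (v * (s⁻¹ * w))) := (inv_mul_cancel_left _ _).symm
      _ = s⁻¹ * (v * (s * (s⁻¹ * w))) := by rw [h_sv']
      _ = s⁻¹ * (v * w) := by rw [mul_inv_cancel_left]
  have r_isv : ∀ w : G, s⁻¹ * (v * w) = v * (s⁻¹ * w) := fun w => (r_sv w).symm
  have r_vt : ∀ w : G, v * (t⁻¹ * w) = t⁻¹ * (v⁻¹ * (t * (v * w))) := fun w => by
    symm
    calc t⁻¹ * (v⁻¹ * (t * (v * w)))
        = t⁻¹ * (v⁻¹ * (t * (v * (t * (t⁻¹ * w))))) := by rw [mul_inv_cancel_left]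
      _ = t⁻¹ * (v⁻¹ * (v * (t * (v * (t⁻¹ * w))))) := by rw [h_tv']
      _ = v * (t⁻¹ * w) := by rw [inv_mul_cancel_left, inv_mul_cancel_left]
  have r_sc : ∀ w : G, s * (c * w) = c * (s * w) := fun w => (h_cs' w).symm
  have r_vp2 : ∀ w : G, v * (p * w) = p * (v * w) := fun w => (h_pv' w).symm
  have r_vtc : ∀ w : G, v * (t * (c * w)) = b * (v * (t * w)) := fun w => (h_bvt' w).symm
  have r_tpb : ∀ w : G, t * (p * (b * w)) = p * (b * (s⁻¹ * w)) := fun w => by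
    conv_lhs => rw [show w = s * (s⁻¹ * w) from (mul_inv_cancel_left s w).symm]
    rw [hSi']
  have r_sts : ∀ w : G, s⁻¹ * (t * (s * (t * w))) = t * (s * w) := fun w => by
    rw [← h_st', inv_mul_cancel_left]
  have r_vp : ∀ w : G, v⁻¹ * (p * w) = p * (v⁻¹ * w) := fun w => by
    calc v⁻¹ * (p * w) = v⁻¹ * (p * (v * (v⁻¹ * w))) := by rw [mul_inv_cancel_left]
      _ = v⁻¹ * (v * (p * (v⁻¹ * w))) := by rw [h_pv']
      _ = p * (v⁻¹ * w) := by rw [inv_mul_cancel_left]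
  have r_vbvt : ∀ w : G, v⁻¹ * (b * (v * (t * w))) = t * (c * w) := fun w => by
    rw [h_bvt', inv_mul_cancel_left]
  have key : ∀ w : G, v * (b * (c * (t * w))) = b * (c * w) := fun w => by
    calc v * (b * (c * (t * w)))
        = v * (s⁻¹ * (t⁻¹ * (p * (t * (s * (c * (t * w))))))) := by rw [r_b]
      _ = s⁻¹ * (v * (t⁻¹ * (p * (t * (s * (c * (t * w))))))) := by rw [r_sv]
      _ = s⁻¹ * (t⁻¹ * (v⁻¹ * (t * (v * (p * (t * (s * (c * (t * w))))))))) := by rw [r_vt]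
      _ = s⁻¹ * (t⁻¹ * (v⁻¹ * (t * (v * (p * (t * (c * (s * (t * w))))))))) := by rw [r_sc]
      _ = s⁻¹ * (t⁻¹ * (v⁻¹ * (t * (p * (v * (t * (c * (s * (t * w))))))))) := by rw [r_vp2]
      _ = s⁻¹ * (t⁻¹ * (v⁻¹ * (t * (p * (b * (v * (t * (s * (t * w))))))))) := by rw [r_vtc]
      _ = s⁻¹ * (t⁻¹ * (v⁻¹ * (p * (b * (s⁻¹ * (v * (t * (s * (t * w))))))))) := by rw [r_tpb]
      _ = s⁻¹ * (t⁻¹ * (v⁻¹ * (p * (b * (v * (s⁻¹ * (t * (s * (t * w))))))))) := by rw [r_isv]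
      _ = s⁻¹ * (t⁻¹ * (v⁻¹ * (p * (b * (v * (t * (s * w))))))) := by rw [r_sts]
      _ = s⁻¹ * (t⁻¹ * (p * (v⁻¹ * (b * (v * (t * (s * w))))))) := by rw [r_vp]
      _ = s⁻¹ * (t⁻¹ * (p * (t * (c * (s * w))))) := by rw [r_vbvt]
      _ = s⁻¹ * (t⁻¹ * (p * (t * (s * (c * w))))) := by rw [h_cs']
      _ = b * (c * w) := (r_b (c * w)).symm
  simpa [mul_assoc] using key 1

/-- relations (E3) and (E4): r a_i = a_i r and u_i r u_i = r for 2 ≤ i ≤ g-1,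
where r = a_1 ⋯ a_{g-1} u_{g-1} ⋯ u_1. -/
theorem rel_E3_E4 (g : ℕ) (a u : ℕ → G)
    (ha1 : ∀ i j, 1 ≤ i → i + 2 ≤ j → j ≤ g - 1 → a i * a j = a j * a i)
    (ha2 : ∀ i, 1 ≤ i → i + 1 ≤ g - 1 → a i * a (i + 1) * a i = a (i + 1) * a i * a (i + 1))
    (hu1 : ∀ i j, 1 ≤ i → i + 2 ≤ j → j ≤ g - 1 → u i * u j = u j * u i)
    (hu2 : ∀ i, 1 ≤ i → i + 1 ≤ g - 1 → u i * u (i + 1) * u i = u (i + 1) * u i * u (i + 1))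
    (hC1 : ∀ i j, 1 ≤ i → i ≤ g - 1 → 1 ≤ j → j ≤ g - 1 → (i + 2 ≤ j ∨ j + 2 ≤ i) →
      a i * u j = u j * a i)
    (hC2 : ∀ i, 1 ≤ i → i ≤ g - 2 → a i * u (i + 1) * u i = u (i + 1) * u i * a (i + 1))
    (hC3 : ∀ i, 1 ≤ i → i ≤ g - 2 → a (i + 1) * u i * u (i + 1) = u i * u (i + 1) * a i)
    (hC4 : a 1 * u 1 * a 1 = u 1)
    (hC5 : u 2 * a 1 * a 2 * u 1 = a 1 * a 2)
    :
    ∀ i, 2 ≤ i → i ≤ g - 1 →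
      (prodAsc a (g - 1) * prodDesc u (g - 1)) * a i =
        a i * (prodAsc a (g - 1) * prodDesc u (g - 1)) ∧
      u i * (prodAsc a (g - 1) * prodDesc u (g - 1)) * u i =
        prodAsc a (g - 1) * prodDesc u (g - 1) := by
  -- The shifted relation (C5)ᵢ : uᵢ₊₂ aᵢ₊₁ aᵢ₊₂ uᵢ₊₁ = aᵢ₊₁ aᵢ₊₂
  have hS : ∀ k, k + 2 ≤ g - 1 →
      u (k + 2) * a (k + 1) * a (k + 2) * u (k + 1) = a (k + 1) * a (k + 2) := by
    intro k
    induction k with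
    | zero =>
      intro _
      show u 2 * a 1 * a 2 * u 1 = a 1 * a 2
      exact hC5
    | succ k ih =>
      intro hk
      have hk' : k + 2 ≤ g - 1 := by omega
      have h_st : u (k + 1) * u (k + 2) * u (k + 1) = u (k + 2) * u (k + 1) * u (k + 2) :=
        hu2 (k + 1) (by omega) (by omega)
      have h_tv : u (k + 2) * u (k + 3) * u (k + 2) = u (k + 3) * u (k + 2) * u (k + 3) :=
        hu2 (k + 2) (by omega) (by omega)
      have h_sv : u (k + 1) * u (k + 3) = u (k + 3) * u (k + 1) :=
        hu1 (k + 1) (k + 3) (by omega) (by omega) (by omega)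
      have h_cs : a (k + 3) * u (k + 1) = u (k + 1) * a (k + 3) :=
        hC1 (k + 3) (k + 1) (by omega) (by omega) (by omega) (by omega) (Or.inr (by omega))
      have h_pv : a (k + 1) * u (k + 3) = u (k + 3) * a (k + 1) :=
        hC1 (k + 1) (k + 3) (by omega) (by omega) (by omega) (by omega) (Or.inl (by omega))
      have h_pts : a (k + 1) * u (k + 2) * u (k + 1) = u (k + 2) * u (k + 1) * a (k + 2) :=
        hC2 (k + 1) (by omega) (by omega)
      have h_bvt : a (k + 2) * u (k + 3) * u (k + 2) = u (k + 3) * u (k + 2) * a (k + 3) :=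
        hC2 (k + 2) (by omega) (by omega)
      show u (k + 3) * a (k + 2) * a (k + 3) * u (k + 2) = a (k + 2) * a (k + 3)
      exact c5_step (a (k + 1)) (a (k + 2)) (a (k + 3)) (u (k + 1)) (u (k + 2)) (u (k + 3))
        h_st h_tv h_sv h_cs h_pv h_pts h_bvt (ih hk')
  -- (i)  aᵢ x = x aᵢ₋₁  where x = a₁ ⋯ a_m
  have hA : ∀ k m, k + 2 ≤ m → m ≤ g - 1 →
      a (k + 2) * prodAsc a m = prodAsc a m * a (k + 1) := by
    intro k m hkm
    induction m, hkm using Nat.le_induction with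
    | base =>
      intro hm
      have e : prodAsc a (k + 2) = prodAsc a k * a (k + 1) * a (k + 2) := by
        rw [show k + 2 = k + 1 + 1 from rfl, prodAsc_succ, prodAsc_succ]
      have hcomm : a (k + 2) * prodAsc a k = prodAsc a k * a (k + 2) :=
        commute_prodAsc a k _ (fun j h1 h2 =>
          (ha1 j (k + 2) h1 (by omega) (by omega)).symm)
      have hb : a (k + 2) * (a (k + 1) * a (k + 2)) = a (k + 1) * (a (k + 2) * a (k + 1)) := by
        simpa [mul_assoc] using (ha2 (k + 1) (by omega) (by omega)).symm
      calc a (k + 2) * prodAsc a (k + 2)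
          = a (k + 2) * prodAsc a k * (a (k + 1) * a (k + 2)) := by
            rw [e]; simp only [mul_assoc]
        _ = prodAsc a k * a (k + 2) * (a (k + 1) * a (k + 2)) := by rw [hcomm]
        _ = prodAsc a k * (a (k + 2) * (a (k + 1) * a (k + 2))) := by simp only [mul_assoc]
        _ = prodAsc a k * (a (k + 1) * (a (k + 2) * a (k + 1))) := by rw [hb]
        _ = prodAsc a k * a (k + 1) * a (k + 2) * a (k + 1) := by simp only [mul_assoc]
        _ = prodAsc a (k + 2) * a (k + 1) := by rw [e]
    | succ m hkm ih =>
      intro hm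
      have ih' := ih (by omega)
      have hc : a (k + 1) * a (m + 1) = a (m + 1) * a (k + 1) :=
        ha1 (k + 1) (m + 1) (by omega) (by omega) hm
      calc a (k + 2) * prodAsc a (m + 1)
          = a (k + 2) * prodAsc a m * a (m + 1) := by rw [prodAsc_succ, mul_assoc]
        _ = prodAsc a m * a (k + 1) * a (m + 1) := by rw [ih']
        _ = prodAsc a m * (a (k + 1) * a (m + 1)) := by rw [mul_assoc]
        _ = prodAsc a m * (a (m + 1) * a (k + 1)) := by rw [hc]
        _ = prodAsc a m * a (m + 1) * a (k + 1) := by rw [mul_assoc]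
        _ = prodAsc a (m + 1) * a (k + 1) := by rw [prodAsc_succ]
  -- (ii)  aᵢ₋₁ z = z aᵢ  where z = u_m ⋯ u₁
  have hB : ∀ k m, k + 2 ≤ m → m ≤ g - 1 →
      a (k + 1) * prodDesc u m = prodDesc u m * a (k + 2) := by
    intro k m hkm
    induction m, hkm using Nat.le_induction with
    | base =>
      intro hm
      have e : prodDesc u (k + 2) = u (k + 2) * (u (k + 1) * prodDesc u k) := by
        rw [show k + 2 = k + 1 + 1 from rfl, prodDesc_succ, prodDesc_succ]
      have h2 : a (k + 1) * u (k + 2) * u (k + 1) = u (k + 2) * u (k + 1) * a (k + 2) :=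
        hC2 (k + 1) (by omega) (by omega)
      have hcz : a (k + 2) * prodDesc u k = prodDesc u k * a (k + 2) :=
        commute_prodDesc u k _ (fun j h1 h2 =>
          hC1 (k + 2) j (by omega) (by omega) h1 (by omega) (Or.inr (by omega)))
      calc a (k + 1) * prodDesc u (k + 2)
          = a (k + 1) * u (k + 2) * u (k + 1) * prodDesc u k := by
            rw [e]; simp only [mul_assoc]
        _ = u (k + 2) * u (k + 1) * a (k + 2) * prodDesc u k := by rw [h2]
        _ = u (k + 2) * u (k + 1) * (a (k + 2) * prodDesc u k) := by simp only [mul_assoc]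
        _ = u (k + 2) * u (k + 1) * (prodDesc u k * a (k + 2)) := by rw [hcz]
        _ = u (k + 2) * (u (k + 1) * prodDesc u k) * a (k + 2) := by simp only [mul_assoc]
        _ = prodDesc u (k + 2) * a (k + 2) := by rw [e]
    | succ m hkm ih =>
      intro hm
      have ih' := ih (by omega)
      have hc : a (k + 1) * u (m + 1) = u (m + 1) * a (k + 1) :=
        hC1 (k + 1) (m + 1) (by omega) (by omega) (by omega) (by omega) (Or.inl (by omega))
      calc a (k + 1) * prodDesc u (m + 1)
          = a (k + 1) * u (m + 1) * prodDesc u m := by rw [prodDesc_succ, mul_assoc]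
        _ = u (m + 1) * a (k + 1) * prodDesc u m := by rw [hc]
        _ = u (m + 1) * (a (k + 1) * prodDesc u m) := by rw [mul_assoc]
        _ = u (m + 1) * (prodDesc u m * a (k + 2)) := by rw [ih']
        _ = u (m + 1) * prodDesc u m * a (k + 2) := by rw [mul_assoc]
        _ = prodDesc u (m + 1) * a (k + 2) := by rw [prodDesc_succ]
  -- (iv)  uᵢ₋₁ z = z uᵢ
  have hD : ∀ k m, k + 2 ≤ m → m ≤ g - 1 →
      u (k + 1) * prodDesc u m = prodDesc u m * u (k + 2) := by
    intro k m hkm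
    induction m, hkm using Nat.le_induction with
    | base =>
      intro hm
      have e : prodDesc u (k + 2) = u (k + 2) * (u (k + 1) * prodDesc u k) := by
        rw [show k + 2 = k + 1 + 1 from rfl, prodDesc_succ, prodDesc_succ]
      have h2 : u (k + 1) * u (k + 2) * u (k + 1) = u (k + 2) * u (k + 1) * u (k + 2) :=
        hu2 (k + 1) (by omega) (by omega)
      have hcz : u (k + 2) * prodDesc u k = prodDesc u k * u (k + 2) :=
        commute_prodDesc u k _ (fun j h1 h2 =>
          (hu1 j (k + 2) h1 (by omega) (by omega)).symm)
      calc u (k + 1) * prodDesc u (k + 2)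
          = u (k + 1) * u (k + 2) * u (k + 1) * prodDesc u k := by
            rw [e]; simp only [mul_assoc]
        _ = u (k + 2) * u (k + 1) * u (k + 2) * prodDesc u k := by rw [h2]
        _ = u (k + 2) * u (k + 1) * (u (k + 2) * prodDesc u k) := by simp only [mul_assoc]
        _ = u (k + 2) * u (k + 1) * (prodDesc u k * u (k + 2)) := by rw [hcz]
        _ = u (k + 2) * (u (k + 1) * prodDesc u k) * u (k + 2) := by simp only [mul_assoc]
        _ = prodDesc u (k + 2) * u (k + 2) := by rw [e]
    | succ m hkm ih =>
      intro hm
      have ih' := ih (by omega)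
      have hc : u (k + 1) * u (m + 1) = u (m + 1) * u (k + 1) :=
        hu1 (k + 1) (m + 1) (by omega) (by omega) (by omega)
      calc u (k + 1) * prodDesc u (m + 1)
          = u (k + 1) * u (m + 1) * prodDesc u m := by rw [prodDesc_succ, mul_assoc]
        _ = u (m + 1) * u (k + 1) * prodDesc u m := by rw [hc]
        _ = u (m + 1) * (u (k + 1) * prodDesc u m) := by rw [mul_assoc]
        _ = u (m + 1) * (prodDesc u m * u (k + 2)) := by rw [ih']
        _ = u (m + 1) * prodDesc u m * u (k + 2) := by rw [mul_assoc]
        _ = prodDesc u (m + 1) * u (k + 2) := by rw [prodDesc_succ]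
  -- (iii)  uᵢ x uᵢ₋₁ = x
  have hU : ∀ k m, k + 2 ≤ m → m ≤ g - 1 →
      u (k + 2) * prodAsc a m * u (k + 1) = prodAsc a m := by
    intro k m hkm
    induction m, hkm using Nat.le_induction with
    | base =>
      intro hm
      have e : prodAsc a (k + 2) = prodAsc a k * a (k + 1) * a (k + 2) := by
        rw [show k + 2 = k + 1 + 1 from rfl, prodAsc_succ, prodAsc_succ]
      have hcp : u (k + 2) * prodAsc a k = prodAsc a k * u (k + 2) :=
        commute_prodAsc a k _ (fun j h1 h2 =>
          (hC1 j (k + 2) h1 (by omega) (by omega) (by omega) (Or.inl (by omega))).symm)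
      have hs := hS k (by omega)
      calc u (k + 2) * prodAsc a (k + 2) * u (k + 1)
          = u (k + 2) * prodAsc a k * (a (k + 1) * (a (k + 2) * u (k + 1))) := by
            rw [e]; simp only [mul_assoc]
        _ = prodAsc a k * u (k + 2) * (a (k + 1) * (a (k + 2) * u (k + 1))) := by rw [hcp]
        _ = prodAsc a k * (u (k + 2) * a (k + 1) * a (k + 2) * u (k + 1)) := by
            simp only [mul_assoc]
        _ = prodAsc a k * (a (k + 1) * a (k + 2)) := by rw [hs]
        _ = prodAsc a (k + 2) := by rw [e, mul_assoc]
    | succ m hkm ih =>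
      intro hm
      have ih' := ih (by omega)
      have hc : a (m + 1) * u (k + 1) = u (k + 1) * a (m + 1) :=
        hC1 (m + 1) (k + 1) (by omega) (by omega) (by omega) (by omega) (Or.inr (by omega))
      calc u (k + 2) * prodAsc a (m + 1) * u (k + 1)
          = u (k + 2) * prodAsc a m * (a (m + 1) * u (k + 1)) := by
            rw [prodAsc_succ]; simp only [mul_assoc]
        _ = u (k + 2) * prodAsc a m * (u (k + 1) * a (m + 1)) := by rw [hc]
        _ = u (k + 2) * prodAsc a m * u (k + 1) * a (m + 1) := by simp only [mul_assoc]
        _ = prodAsc a m * a (m + 1) := by rw [ih']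
        _ = prodAsc a (m + 1) := (prodAsc_succ a m).symm
  intro i h2i hig
  obtain ⟨k, rfl⟩ : ∃ k, i = k + 2 := ⟨i - 2, by omega⟩
  have hA' := hA k (g - 1) (by omega) le_rfl
  have hB' := hB k (g - 1) (by omega) le_rfl
  have hD' := hD k (g - 1) (by omega) le_rfl
  have hU' := hU k (g - 1) (by omega) le_rfl
  constructor
  · calc prodAsc a (g - 1) * prodDesc u (g - 1) * a (k + 2)
        = prodAsc a (g - 1) * (prodDesc u (g - 1) * a (k + 2)) := by rw [mul_assoc]
      _ = prodAsc a (g - 1) * (a (k + 1) * prodDesc u (g - 1)) := by rw [← hB']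
      _ = prodAsc a (g - 1) * a (k + 1) * prodDesc u (g - 1) := by rw [mul_assoc]
      _ = a (k + 2) * prodAsc a (g - 1) * prodDesc u (g - 1) := by rw [← hA']
      _ = a (k + 2) * (prodAsc a (g - 1) * prodDesc u (g - 1)) := by rw [mul_assoc]
  · calc u (k + 2) * (prodAsc a (g - 1) * prodDesc u (g - 1)) * u (k + 2)
        = u (k + 2) * prodAsc a (g - 1) * (prodDesc u (g - 1) * u (k + 2)) := by
          simp only [mul_assoc]
      _ = u (k + 2) * prodAsc a (g - 1) * (u (k + 1) * prodDesc u (g - 1)) := by rw [← hD']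
      _ = u (k + 2) * prodAsc a (g - 1) * u (k + 1) * prodDesc u (g - 1) := by
          simp only [mul_assoc]
      _ = prodAsc a (g - 1) * prodDesc u (g - 1) := by rw [hU']
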